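/- Let Γ = {y ∈ ℝ² : y₂ ≥ y₁}, F : ℝ → ℝ² given by F(x) = (x, sin x), and x̄ = 0. Then MSCQ fails at x̄: for x_k = 1/k one has d_{F^{-1}(Γ)}(x_k) = x_k while d_Γ(F(x_k)) ≤ (x_k − sin x_k)/√2 = o(x_k), so no constant κ and neighborhood of 0 satisfy d_{F^{-1}(Γ)}(x) ≤ κ d_Γ(F(x)). -/

import Mathlib

open Set Filter Topology Metric

noncomputable section

/-- The vector `(a, b)` in the Euclidean plane. -/
def v2 (a b : ℝ) : EuclideanSpace ℝ (Fin 2) :=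
  (WithLp.equiv 2 (Fin 2 → ℝ)).symm ![a, b]

/-- `Γ = {y ∈ ℝ² : y₂ ≥ y₁}`. -/
def Gamma13 : Set (EuclideanSpace ℝ (Fin 2)) :=
  {y | y 0 ≤ y 1}

/-- `F(x) = (x, sin x)`. -/
def F13 (x : ℝ) : EuclideanSpace ℝ (Fin 2) := v2 x (Real.sin x)

lemma dist_v2 (a b c d : ℝ) : dist (v2 a b) (v2 c d) = Real.sqrt ((a-c)^2 + (b-d)^2) := by
  rw [EuclideanSpace.dist_eq]
  simp [v2, Fin.sum_univ_two, Real.dist_eq, sq_abs]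

lemma pre13_eq : F13 ⁻¹' Gamma13 = Set.Iic 0 := by
  ext x
  simp only [Set.mem_preimage, Gamma13, F13, Set.mem_setOf_eq, Set.mem_Iic]
  show x ≤ Real.sin x ↔ x ≤ 0
  constructor
  · intro h
    by_contra hx
    push_neg at hx
    exact absurd h (not_le.2 (Real.sin_lt hx))
  · intro h
    rcases lt_or_eq_of_le h with h | h
    · have := Real.sin_lt (neg_pos.2 h)
      rw [Real.sin_neg] at this
      linarith
    · subst h; simp

lemma infDist_Iic_eq {x : ℝ} (hx : 0 ≤ x) : Metric.infDist x (Set.Iic (0:ℝ)) = x := by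
  apply le_antisymm
  · have := Metric.infDist_le_dist_of_mem (x := x) (y := (0:ℝ)) (Set.mem_Iic.2 le_rfl)
    rwa [Real.dist_eq, sub_zero, abs_of_nonneg hx] at this
  · by_contra h'
    push_neg at h'
    obtain ⟨y, hy, hd⟩ := (Metric.infDist_lt_iff ⟨0, Set.mem_Iic.2 le_rfl⟩).1 h'
    have hy0 : y ≤ 0 := hy
    rw [Real.dist_eq] at hd
    have : x - y ≤ |x - y| := le_abs_self _
    linarith

lemma infDist_gamma_le {x : ℝ} (hs : Real.sin x ≤ x) :
    Metric.infDist (F13 x) Gamma13 ≤ (x - Real.sin x) / Real.sqrt 2 := by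
  set m := (x + Real.sin x) / 2 with hm
  have hmem : v2 m m ∈ Gamma13 := by
    show (v2 m m) 0 ≤ (v2 m m) 1
    exact le_rfl
  calc Metric.infDist (F13 x) Gamma13 ≤ dist (F13 x) (v2 m m) :=
        Metric.infDist_le_dist_of_mem hmem
    _ = (x - Real.sin x) / Real.sqrt 2 := by
        rw [F13, dist_v2]
        have h1 : (x - m)^2 + (Real.sin x - m)^2 = (x - Real.sin x)^2 / 2 := by
          rw [hm]; ring
        rw [h1, Real.sqrt_div (sq_nonneg _), Real.sqrt_sq (by linarith)]

theorem stmt13 :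
    (∀ k : ℕ, 0 < k →
      Metric.infDist (1 / (k : ℝ)) (F13 ⁻¹' Gamma13) = 1 / (k : ℝ) ∧
      Metric.infDist (F13 (1 / (k : ℝ))) Gamma13 ≤
        (1 / (k : ℝ) - Real.sin (1 / (k : ℝ))) / Real.sqrt 2) ∧
    ¬ ∃ U ∈ 𝓝 (0 : ℝ), ∃ κ > (0 : ℝ), ∀ x ∈ U,
        Metric.infDist x (F13 ⁻¹' Gamma13) ≤ κ * Metric.infDist (F13 x) Gamma13 := by
  constructor
  · intro k hk
    have hk' : (0:ℝ) < 1 / k := by positivity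
    constructor
    · rw [pre13_eq]; exact infDist_Iic_eq hk'.le
    · exact infDist_gamma_le (Real.sin_le hk'.le)
  · rintro ⟨U, hU, κ, hκ, h⟩
    obtain ⟨ε, hε, hball⟩ := Metric.mem_nhds_iff.1 hU
    set x := min (ε/2) (min 1 (1 / Real.sqrt κ)) with hx
    have hsκ : 0 < Real.sqrt κ := Real.sqrt_pos.2 hκ
    have hx0 : 0 < x := by
      apply lt_min (by positivity) (lt_min one_pos (by positivity))
    have hx1 : x ≤ 1 := le_trans (min_le_right _ _) (min_le_left _ _)
    have hxκ : x ≤ 1 / Real.sqrt κ := le_trans (min_le_right _ _) (min_le_right _ _)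
    have hxU : x ∈ U := by
      apply hball
      rw [Metric.mem_ball, Real.dist_eq, sub_zero, abs_of_pos hx0]
      calc x ≤ ε/2 := min_le_left _ _
        _ < ε := by linarith
    have hsin : Real.sin x ≤ x := Real.sin_le hx0.le
    have key := h x hxU
    rw [pre13_eq, infDist_Iic_eq hx0.le] at key
    have h2 : Metric.infDist (F13 x) Gamma13 ≤ x - Real.sin x := by
      refine (infDist_gamma_le hsin).trans ?_
      have h2' : (1:ℝ) ≤ Real.sqrt 2 := by
        rw [show (1:ℝ) = Real.sqrt 1 by simp]
        exact Real.sqrt_le_sqrt (by norm_num)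
      rw [div_le_iff₀ (by positivity)]
      nlinarith
    have hcube : x - Real.sin x < x^3/4 := by
      have := Real.sin_gt_sub_cube hx0
      linarith [pow_pos hx0 3]
    have hκx : κ * x^2 ≤ 1 := by
      have h3 : x * Real.sqrt κ ≤ 1 := by
        rw [← le_div_iff₀ hsκ]; exact hxκ
      nlinarith [Real.sq_sqrt hκ.le, mul_nonneg hx0.le hsκ.le]
    have : x ≤ κ * (x^3/4) := by
      calc x ≤ κ * Metric.infDist (F13 x) Gamma13 := key
        _ ≤ κ * (x - Real.sin x) := by
            exact mul_le_mul_of_nonneg_left h2 hκ.le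
        _ ≤ κ * (x^3/4) := mul_le_mul_of_nonneg_left hcube.le hκ.le
    nlinarith
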